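/- Lyapunov increase of utility under gradient scheduling fluid dynamics: let X ⊂ ℝ_{>0}^N be compact convex, U(x) = ∑_i log x_i, and x* = argmax_{x ∈ X} U(x). Suppose x : [0,∞) → ℝ_{>0}^N satisfies x'(t) = v(t) - x(t) with v(t) ∈ argmax_{v ∈ X} ∑_i v_i / x_i(t) for a.e. t, and x(t) ∈ X for all t. Then for a.e. t with x(t) ≠ x*, (d/dt) U(x(t)) = ∑_i (v_i(t) - x_i(t))/x_i(t) > 0; that is, U(x(t)) is strictly increasing away from x*. -/

import Mathlib

open MeasureTheory

/-- Lyapunov increase of the log-utility `U(x) = ∑ᵢ log xᵢ` under the gradient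
scheduling fluid dynamics: if `x(t) ∈ X` solves `x'(t) = v(t) - x(t)` a.e. with
drift `v(t)` maximizing `∑ᵢ vᵢ / xᵢ(t)` over the compact convex set
`X ⊂ ℝ_{>0}^N`, and `x*` is the maximizer of `U` over `X`, then for a.e. `t`,
`(d/dt) U(x(t)) = ∑ᵢ (vᵢ(t) - xᵢ(t))/xᵢ(t)`, which is strictly positive
whenever `x(t) ≠ x*`. -/
theorem fluid_log_utility_lyapunov
    (N : ℕ) (X : Set (Fin N → ℝ))
    (hXpos : X ⊆ {y | ∀ i, 0 < y i})
    (hXcomp : IsCompact X) (hXconv : Convex ℝ X)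
    (xstar : Fin N → ℝ) (hxstar : xstar ∈ X)
    (hxstarMax : ∀ y ∈ X, ∑ i, Real.log (y i) ≤ ∑ i, Real.log (xstar i))
    (x v : ℝ → (Fin N → ℝ))
    (hxX : ∀ t : ℝ, 0 ≤ t → x t ∈ X)
    (hvX : ∀ᵐ t ∂(volume.restrict (Set.Ici (0 : ℝ))),
      v t ∈ X ∧ ∀ w ∈ X, ∑ i, w i / x t i ≤ ∑ i, v t i / x t i)
    (hderiv : ∀ᵐ t ∂(volume.restrict (Set.Ici (0 : ℝ))),
      ∀ i, HasDerivAt (fun s => x s i) (v t i - x t i) t) :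
    ∀ᵐ t ∂(volume.restrict (Set.Ici (0 : ℝ))),
      HasDerivAt (fun s => ∑ i, Real.log (x s i))
        (∑ i, (v t i - x t i) / x t i) t ∧
      (x t ≠ xstar → 0 < ∑ i, (v t i - x t i) / x t i) := by

  filter_upwards [hvX, hderiv, ae_restrict_mem measurableSet_Ici] with t hvt hd ht
  obtain ⟨hvtX, hmax⟩ := hvt
  have hxpos : ∀ i, 0 < x t i := hXpos (hxX t ht)
  have hxspos : ∀ i, 0 < xstar i := hXpos hxstar
  constructor
  · exact HasDerivAt.fun_sum fun i _ => (hd i).log (ne_of_gt (hxpos i))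
  · intro hne
    have key : (N : ℝ) < ∑ i, xstar i / x t i := by
      by_contra h
      push_neg at h
      have hterm : ∀ i ∈ Finset.univ,
          0 ≤ xstar i / x t i - 1 - Real.log (xstar i / x t i) := by
        intro i _
        have := Real.log_le_sub_one_of_pos (div_pos (hxspos i) (hxpos i))
        linarith
      have hlogsum : 0 ≤ ∑ i, Real.log (xstar i / x t i) := by
        have : ∑ i, Real.log (xstar i / x t i)
            = ∑ i, Real.log (xstar i) - ∑ i, Real.log (x t i) := by
          rw [← Finset.sum_sub_distrib]
          exact Finset.sum_congr rfl fun i _ =>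
            Real.log_div (ne_of_gt (hxspos i)) (ne_of_gt (hxpos i))
        rw [this]
        linarith [hxstarMax (x t) (hxX t ht)]
      have hsumle : ∑ i, (xstar i / x t i - 1 - Real.log (xstar i / x t i)) ≤ 0 := by
        have : ∑ i, (xstar i / x t i - 1 - Real.log (xstar i / x t i))
            = (∑ i, xstar i / x t i) - N - ∑ i, Real.log (xstar i / x t i) := by
          simp [Finset.sum_sub_distrib]
        rw [this]
        linarith
      have hzero : ∀ i ∈ Finset.univ,
          xstar i / x t i - 1 - Real.log (xstar i / x t i) = 0 := by
        rw [← Finset.sum_eq_zero_iff_of_nonneg hterm]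
        exact le_antisymm hsumle (Finset.sum_nonneg hterm)
      apply hne
      funext i
      have hz := hzero i (Finset.mem_univ i)
      have hone : xstar i / x t i = 1 := by
        by_contra hne1
        have := Real.log_lt_sub_one_of_pos (div_pos (hxspos i) (hxpos i)) hne1
        linarith
      exact ((div_eq_one_iff_eq (ne_of_gt (hxpos i))).mp hone).symm
    have hvs : ∑ i, xstar i / x t i ≤ ∑ i, v t i / x t i := hmax xstar hxstar
    have : ∑ i, (v t i - x t i) / x t i = (∑ i, v t i / x t i) - N := by
      have : ∀ i ∈ Finset.univ, (v t i - x t i) / x t i = v t i / x t i - 1 := by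
        intro i _
        rw [sub_div, div_self (ne_of_gt (hxpos i))]
      rw [Finset.sum_congr rfl this, Finset.sum_sub_distrib]
      simp
    rw [this]
    linarith
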